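/- arXiv:math/0606368 — 4 statements merged into one kernel-verified Lean document; each statement's English description precedes it below -/
import Mathlib

section
/- Let T/K be a cyclic extension of number fields and M/K a Galois extension of number fields with gcd([M:K],[T:K]) = 1. If a prime 𝔭 of K does not split in T/K (i.e. has a unique prime above it in T), then any prime of M above 𝔭 does not split in the compositum extension MT/M. -/
open NumberField Ideal Module
open scoped Classical


section Helpers

variable (k F : Type*) [Field k] [Field F] [NumberField k] [NumberField F]
  [Algebra k F] [FiniteDimensional k F]

lemma myOIinj : Function.Injective (algebraMap (𝓞 k) (𝓞 F)) := by
  have h1 : Function.Injective (algebraMap (𝓞 k) F) := by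
    rw [IsScalarTower.algebraMap_eq (𝓞 k) k F]
    exact (algebraMap k F).injective.comp (IsFractionRing.injective (𝓞 k) k)
  intro x y hxy
  apply h1
  rw [IsScalarTower.algebraMap_apply (𝓞 k) (𝓞 F) F, hxy,
    ← IsScalarTower.algebraMap_apply (𝓞 k) (𝓞 F) F]

lemma myOIfinite : Module.Finite (𝓞 k) (𝓞 F) := by
  haveI : Algebra.IsAlgebraic k F := Algebra.IsAlgebraic.of_finite k F
  exact IsIntegralClosure.finite (𝓞 k) k F (𝓞 F)

variable {k F}

lemma my_mem_factors_iff {P : Ideal (𝓞 k)} (hP : P.IsMaximal) (Q : Ideal (𝓞 F)) :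
    Q ∈ (UniqueFactorizationMonoid.factors (map (algebraMap (𝓞 k) (𝓞 F)) P)).toFinset ↔
      Q.IsMaximal ∧ comap (algebraMap (𝓞 k) (𝓞 F)) Q = P := by
  have hP0 : P ≠ ⊥ := Ring.ne_bot_of_isMaximal_of_not_isField hP (RingOfIntegers.not_isField k)
  have hmapne : map (algebraMap (𝓞 k) (𝓞 F)) P ≠ ⊥ := by
    rw [Ne, Ideal.map_eq_bot_iff_of_injective (myOIinj k F)]
    exact hP0
  rw [Multiset.mem_toFinset, UniqueFactorizationMonoid.factors_eq_normalizedFactors,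
    Ideal.mem_normalizedFactors_iff hmapne]
  constructor
  · rintro ⟨hQp, hle⟩
    have hQ0 : Q ≠ ⊥ := fun h => hmapne (le_bot_iff.mp (h ▸ hle))
    have hQmax : Q.IsMaximal := Ring.DimensionLEOne.maximalOfPrime hQ0 hQp
    refine ⟨hQmax, ?_⟩
    have h1 : P ≤ comap (algebraMap (𝓞 k) (𝓞 F)) Q := map_le_iff_le_comap.mp hle
    exact (hP.eq_of_le (Ideal.comap_ne_top _ hQmax.ne_top) h1).symm
  · rintro ⟨hQmax, hc⟩
    exact ⟨hQmax.isPrime, map_le_iff_le_comap.mpr hc.ge⟩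

lemma my_exists_prime_over {P : Ideal (𝓞 k)} (hP : P.IsMaximal) :
    ∃ Q : Ideal (𝓞 F), Q.IsMaximal ∧ comap (algebraMap (𝓞 k) (𝓞 F)) Q = P := by
  haveI := myOIfinite k F
  haveI : Algebra.IsIntegral (𝓞 k) (𝓞 F) := Algebra.IsIntegral.of_finite _ _
  exact Ideal.exists_ideal_over_maximal_of_isIntegral P
    (by rw [(RingHom.injective_iff_ker_eq_bot _).mp (myOIinj k F)]; exact bot_le)

lemma my_exists_comap_eq [IsGalois k F] {Q Q' : Ideal (𝓞 F)} (hQ : Q.IsMaximal)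
    (hQ' : Q'.IsMaximal)
    (h : comap (algebraMap (𝓞 k) (𝓞 F)) Q = comap (algebraMap (𝓞 k) (𝓞 F)) Q') :
    ∃ σ : 𝓞 F ≃ₐ[𝓞 k] 𝓞 F, Q.comap σ = Q' := by
  by_contra hc
  push_neg at hc
  set gr : (F ≃ₐ[k] F) → (𝓞 F ≃ₐ[𝓞 k] 𝓞 F) := fun σ => galRestrict (𝓞 k) k F (𝓞 F) σ with hgr
  have hJmax : ∀ σ : F ≃ₐ[k] F, (Q.comap (gr σ)).IsMaximal := fun σ =>
    Ideal.comap_isMaximal_of_surjective _ (gr σ).surjective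
  have hne : ∀ σ : F ≃ₐ[k] F, ¬ (Q' ≤ Q.comap (gr σ)) := by
    intro σ hle
    exact hc (gr σ) (hQ'.eq_of_le (hJmax σ).ne_top hle).symm
  have hsub : ¬ ((Q' : Set (𝓞 F)) ⊆
      ⋃ σ ∈ ((Finset.univ : Finset (F ≃ₐ[k] F)) : Set (F ≃ₐ[k] F)), ((Q.comap (gr σ) : Ideal (𝓞 F)) : Set (𝓞 F))) := by
    rw [Ideal.subset_union_prime 1 1 (fun σ _ _ _ => (hJmax σ).isPrime)]
    push_neg
    exact fun σ _ => hne σ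
  obtain ⟨x, hxQ', hx⟩ := Set.not_subset.mp hsub
  simp only [Finset.mem_univ, Set.mem_iUnion, SetLike.mem_coe, exists_prop, true_and,
    not_exists] at hx
  have hyQ' : (∏ σ : F ≃ₐ[k] F, gr σ x) ∈ Q' := by
    rw [← Finset.mul_prod_erase Finset.univ _ (Finset.mem_univ (1 : F ≃ₐ[k] F))]
    have h1 : gr 1 x = x := by
      show ((galRestrict (𝓞 k) k F (𝓞 F)) 1) x = x
      rw [map_one]; rfl
    rw [h1]
    exact Ideal.mul_mem_right _ _ hxQ'
  rw [prod_galRestrict_eq_norm (𝓞 k) k F (𝓞 F) x] at hyQ'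
  rw [← Ideal.mem_comap, ← h, Ideal.mem_comap] at hyQ'
  rw [← prod_galRestrict_eq_norm (𝓞 k) k F (𝓞 F) x] at hyQ'
  haveI := hQ.isPrime
  obtain ⟨σ, -, hσ⟩ := (Ideal.IsPrime.prod_mem_iff).mp hyQ'
  exact hx σ hσ

lemma my_ef_dvd [IsGalois k F] {P : Ideal (𝓞 k)} (hP : P.IsMaximal) {Q : Ideal (𝓞 F)}
    (hQ : Q.IsMaximal) (hc : comap (algebraMap (𝓞 k) (𝓞 F)) Q = P) :
    ramificationIdx' P Q
      * inertiaDeg' P Q ∣ finrank k F := by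
  haveI := myOIfinite k F
  haveI := hP
  have hP0 : P ≠ ⊥ := Ring.ne_bot_of_isMaximal_of_not_isField hP (RingOfIntegers.not_isField k)
  have hsum := Ideal.sum_ramification_inertia (R := 𝓞 k) (S := 𝓞 F) (p := P) k F hP0
  rw [← hsum]
  have : ∀ P' ∈ (UniqueFactorizationMonoid.factors (map (algebraMap (𝓞 k) (𝓞 F)) P)).toFinset,
      ramificationIdx' P P' * inertiaDeg' P P'
      = ramificationIdx' P Q
        * inertiaDeg' P Q := by
    intro P' hP'
    rw [my_mem_factors_iff hP] at hP'
    obtain ⟨σ, hσ⟩ := my_exists_comap_eq hQ hP'.1 (hc.trans hP'.2.symm)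
    rw [← hσ, Ideal.ramificationIdx'_comap_eq, Ideal.inertiaDeg'_comap_eq]
  rw [Finset.sum_congr rfl this, Finset.sum_const, smul_eq_mul]
  exact Dvd.intro_left _ rfl

lemma my_nonsplit_ef {P : Ideal (𝓞 k)} (hP : P.IsMaximal)
    (huniq : ∃! Q : Ideal (𝓞 F), Q.IsMaximal ∧ comap (algebraMap (𝓞 k) (𝓞 F)) Q = P)
    {q : Ideal (𝓞 F)} (hq : q.IsMaximal) (hcq : comap (algebraMap (𝓞 k) (𝓞 F)) q = P) :
    ramificationIdx' P q
      * inertiaDeg' P q = finrank k F := by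
  haveI := myOIfinite k F
  haveI := hP
  have hP0 : P ≠ ⊥ := Ring.ne_bot_of_isMaximal_of_not_isField hP (RingOfIntegers.not_isField k)
  have hsum := Ideal.sum_ramification_inertia (R := 𝓞 k) (S := 𝓞 F) (p := P) k F hP0
  obtain ⟨q₀, hq₀, hq₀uniq⟩ := huniq
  have hset : (UniqueFactorizationMonoid.factors (map (algebraMap (𝓞 k) (𝓞 F)) P)).toFinset
      = {q} := by
    ext r
    rw [my_mem_factors_iff hP, Finset.mem_singleton]
    constructor
    · intro hr
      rw [hq₀uniq r hr, ← hq₀uniq q ⟨hq, hcq⟩]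
    · rintro rfl
      exact ⟨hq, hcq⟩
  dsimp only [IsDedekindDomain.primesOverFinset] at hsum
  rw [hset, Finset.sum_singleton] at hsum
  exact hsum

end Helpers

set_option synthInstance.maxHeartbeats 400000
set_option maxHeartbeats 1600000

/-- if `T/K` is cyclic, `M/K` is Galois, `gcd([M:K],[T:K]) = 1`, and a prime
`𝔭` of `K` does not split in `T/K` (unique prime above), then every prime of `M` above `𝔭`
does not split in `MT/M` (unique prime of the compositum above it). -/
theorem stmt4 (K : Type*) [Field K] [NumberField K]
    (M T : IntermediateField K (AlgebraicClosure K))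
    [FiniteDimensional K M] [FiniteDimensional K T]
    [IsGalois K T] [IsCyclic (↥T ≃ₐ[K] ↥T)] [IsGalois K M]
    (hcop : Nat.Coprime (Module.finrank K M) (Module.finrank K T))
    (P : Ideal (𝓞 K)) (hP : P.IsMaximal)
    (hnosplit : ∃! Q : Ideal (𝓞 T),
      Q.IsMaximal ∧ Q.comap (algebraMap (𝓞 K) (𝓞 T)) = P) :
    ∀ Q : Ideal (𝓞 M), Q.IsMaximal → Q.comap (algebraMap (𝓞 K) (𝓞 M)) = P →
      ∃! Q' : Ideal (𝓞 ↥(M ⊔ T)),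
        Q'.IsMaximal ∧
        Q'.comap (RingOfIntegers.mapRingHom
          (IntermediateField.inclusion (le_sup_left : M ≤ M ⊔ T))) = Q := by
  intro Q hQ hQP
  letI : Algebra ↥M ↥(M ⊔ T) := (IntermediateField.inclusion (le_sup_left : M ≤ M ⊔ T)).toAlgebra
  letI : Algebra ↥T ↥(M ⊔ T) := (IntermediateField.inclusion (le_sup_right : T ≤ M ⊔ T)).toAlgebra
  haveI : IsScalarTower K ↥M ↥(M ⊔ T) := IsScalarTower.of_algebraMap_eq fun x => Subtype.ext rfl
  haveI : IsScalarTower K ↥T ↥(M ⊔ T) := IsScalarTower.of_algebraMap_eq fun x => Subtype.ext rfl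
  haveI : NumberField ↥M := NumberField.of_module_finite K ↥M
  haveI : NumberField ↥T := NumberField.of_module_finite K ↥T
  haveI : FiniteDimensional K ↥(M ⊔ T) := IntermediateField.finiteDimensional_sup M T
  haveI : NumberField ↥(M ⊔ T) := NumberField.of_module_finite K ↥(M ⊔ T)
  haveI : FiniteDimensional ↥M ↥(M ⊔ T) := FiniteDimensional.right K ↥M ↥(M ⊔ T)
  haveI : FiniteDimensional ↥T ↥(M ⊔ T) := FiniteDimensional.right K ↥T ↥(M ⊔ T)
  haveI := myOIfinite (↥M) ↥(M ⊔ T)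
  haveI := myOIfinite (↥T) ↥(M ⊔ T)
  haveI := hP
  haveI := hQ
  -- the statement's comap map is the algebraMap
  have halg : (RingOfIntegers.mapRingHom
      (IntermediateField.inclusion (le_sup_left : M ≤ M ⊔ T)) : 𝓞 ↥M →+* 𝓞 ↥(M ⊔ T))
      = algebraMap (𝓞 ↥M) (𝓞 ↥(M ⊔ T)) := rfl
  -- degree bound
  have hMpos : 0 < Module.finrank K ↥M := Module.finrank_pos
  have hTpos : 0 < Module.finrank K ↥T := Module.finrank_pos
  have hLM_le : Module.finrank ↥M ↥(M ⊔ T) ≤ Module.finrank K ↥T := by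
    have h1 : Module.finrank K ↥M * Module.finrank ↥M ↥(M ⊔ T)
        = Module.finrank K ↥(M ⊔ T) := Module.finrank_mul_finrank K ↥M ↥(M ⊔ T)
    have h2 : Module.finrank K ↥(M ⊔ T)
        ≤ Module.finrank K ↥M * Module.finrank K ↥T := IntermediateField.finrank_sup_le M T
    exact Nat.le_of_mul_le_mul_left (h1.trans_le h2) hMpos
  -- basic nonvanishing
  have hP0 : P ≠ ⊥ := Ring.ne_bot_of_isMaximal_of_not_isField hP (RingOfIntegers.not_isField K)
  have hQ0 : Q ≠ ⊥ := by
    rintro rfl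
    rw [← RingHom.ker_eq_comap_bot, (RingHom.injective_iff_ker_eq_bot _).mp
      (myOIinj K ↥M)] at hQP
    exact hP0 hQP.symm
  -- key divisibility for primes above Q
  have key : ∀ Q' : Ideal (𝓞 ↥(M ⊔ T)), Q'.IsMaximal →
      comap (algebraMap (𝓞 ↥M) (𝓞 ↥(M ⊔ T))) Q' = Q →
      Module.finrank K ↥T ∣
        ramificationIdx' Q Q'
          * inertiaDeg' Q Q' := by
    intro Q' hQ'max hQ'c
    haveI := hQ'max
    have hQ'0 : Q' ≠ ⊥ := by
      rintro rfl
      rw [← RingHom.ker_eq_comap_bot, (RingHom.injective_iff_ker_eq_bot _).mp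
        (myOIinj (↥M) ↥(M ⊔ T))] at hQ'c
      exact hQ0 hQ'c.symm
    -- Q' lies over P
    have hQ'P : comap (algebraMap (𝓞 K) (𝓞 ↥(M ⊔ T))) Q' = P := by
      rw [IsScalarTower.algebraMap_eq (𝓞 K) (𝓞 ↥M) (𝓞 ↥(M ⊔ T)), ← comap_comap, hQ'c, hQP]
    -- the prime of T below Q'
    set q' : Ideal (𝓞 ↥T) := comap (algebraMap (𝓞 ↥T) (𝓞 ↥(M ⊔ T))) Q' with hq'def
    haveI : Algebra.IsIntegral (𝓞 ↥T) (𝓞 ↥(M ⊔ T)) := Algebra.IsIntegral.of_finite _ _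
    haveI hq'max : q'.IsMaximal := isMaximal_comap_of_isIntegral_of_isMaximal Q'
    have hq'0 : q' ≠ ⊥ :=
      Ring.ne_bot_of_isMaximal_of_not_isField hq'max (RingOfIntegers.not_isField ↥T)
    have hq'P : comap (algebraMap (𝓞 K) (𝓞 ↥T)) q' = P := by
      rw [hq'def, comap_comap, ← IsScalarTower.algebraMap_eq (𝓞 K) (𝓞 ↥T) (𝓞 ↥(M ⊔ T)), hQ'P]
    -- e f over T is full
    have efT : ramificationIdx' P q'
        * inertiaDeg' P q' = Module.finrank K ↥T :=
      my_nonsplit_ef hP hnosplit hq'max hq'P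
    have heT : ramificationIdx' P q' ∣ Module.finrank K ↥T :=
      efT ▸ dvd_mul_right _ _
    have hfT : inertiaDeg' P q' ∣ Module.finrank K ↥T :=
      efT ▸ dvd_mul_left _ _
    -- e f over M divide [M:K]
    have efM : ramificationIdx' P Q
        * inertiaDeg' P Q ∣ Module.finrank K ↥M :=
      my_ef_dvd hP hQ hQP
    have heM : ramificationIdx' P Q ∣ Module.finrank K ↥M :=
      dvd_trans (dvd_mul_right _ _) efM
    have hfM : inertiaDeg' P Q ∣ Module.finrank K ↥M :=
      dvd_trans (dvd_mul_left _ _) efM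
    -- tower multiplicativity
    haveI : Q.LiesOver P := ⟨hQP.symm⟩
    haveI : Q'.LiesOver Q := ⟨hQ'c.symm⟩
    haveI : q'.LiesOver P := ⟨hq'P.symm⟩
    haveI : Q'.LiesOver q' := ⟨rfl⟩
    have hmapQ : map (algebraMap (𝓞 ↥M) (𝓞 ↥(M ⊔ T))) Q ≠ ⊥ := by
      rw [Ne, Ideal.map_eq_bot_iff_of_injective (myOIinj (↥M) ↥(M ⊔ T))]; exact hQ0
    have hmapq' : map (algebraMap (𝓞 ↥T) (𝓞 ↥(M ⊔ T))) q' ≠ ⊥ := by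
      rw [Ne, Ideal.map_eq_bot_iff_of_injective (myOIinj (↥T) ↥(M ⊔ T))]; exact hq'0
    have hmapP : map (algebraMap (𝓞 K) (𝓞 ↥(M ⊔ T))) P ≠ ⊥ := by
      rw [Ne, Ideal.map_eq_bot_iff_of_injective (myOIinj K ↥(M ⊔ T))]; exact hP0
    have etower1 : ramificationIdx' P Q'
        = ramificationIdx' P Q
          * ramificationIdx' Q Q' :=
      ramificationIdx'_algebra_tower hmapQ hmapP (map_le_iff_le_comap.mpr hQ'c.ge)
    have etower2 : ramificationIdx' P Q'
        = ramificationIdx' P q'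
          * ramificationIdx' q' Q' :=
      ramificationIdx'_algebra_tower hmapq' hmapP map_comap_le
    have ftower1 : inertiaDeg' P Q'
        = inertiaDeg' P Q
          * inertiaDeg' Q Q' :=
      inertiaDeg'_algebra_tower P Q Q'
    have ftower2 : inertiaDeg' P Q'
        = inertiaDeg' P q'
          * inertiaDeg' q' Q' :=
      inertiaDeg'_algebra_tower P q' Q'
    -- coprimality transfers
    have cop_e : Nat.Coprime (ramificationIdx' P q')
        (ramificationIdx' P Q) :=
      Nat.Coprime.coprime_dvd_right heM (hcop.symm.coprime_dvd_left heT)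
    have cop_f : Nat.Coprime (inertiaDeg' P q')
        (inertiaDeg' P Q) :=
      Nat.Coprime.coprime_dvd_right hfM (hcop.symm.coprime_dvd_left hfT)
    have he' : ramificationIdx' P q'
        ∣ ramificationIdx' Q Q' := by
      have : ramificationIdx' P q'
          ∣ ramificationIdx' P Q
            * ramificationIdx' Q Q' := by
        rw [← etower1, etower2]; exact dvd_mul_right _ _
      exact (Nat.Coprime.dvd_of_dvd_mul_left cop_e this)
    have hf' : inertiaDeg' P q'
        ∣ inertiaDeg' Q Q' := by
      have : inertiaDeg' P q'
          ∣ inertiaDeg' P Q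
            * inertiaDeg' Q Q' := by
        rw [← ftower1, ftower2]; exact dvd_mul_right _ _
      exact (Nat.Coprime.dvd_of_dvd_mul_left cop_f this)
    calc Module.finrank K ↥T
        = ramificationIdx' P q'
          * inertiaDeg' P q' := efT.symm
      _ ∣ _ := mul_dvd_mul he' hf'
  -- sum formula over Q
  have hsum := Ideal.sum_ramification_inertia (R := 𝓞 ↥M) (S := 𝓞 ↥(M ⊔ T)) (p := Q)
    (↥M) (↥(M ⊔ T)) hQ0
  -- terms are positive
  have hpos : ∀ Q' ∈ (UniqueFactorizationMonoid.factors
        (map (algebraMap (𝓞 ↥M) (𝓞 ↥(M ⊔ T))) Q)).toFinset,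
      0 < ramificationIdx' Q Q'
        * inertiaDeg' Q Q' := by
    intro Q' hQ'
    rw [my_mem_factors_iff hQ] at hQ'
    obtain ⟨hQ'max, hQ'c⟩ := hQ'
    haveI := hQ'max
    haveI : Q'.LiesOver Q := ⟨hQ'c.symm⟩
    have hmapQ : map (algebraMap (𝓞 ↥M) (𝓞 ↥(M ⊔ T))) Q ≠ ⊥ := by
      rw [Ne, Ideal.map_eq_bot_iff_of_injective (myOIinj (↥M) ↥(M ⊔ T))]; exact hQ0
    have hene : ramificationIdx' Q Q' ≠ 0 :=
      IsDedekindDomain.ramificationIdx'_ne_zero hmapQ hQ'max.isPrime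
        (map_le_iff_le_comap.mpr hQ'c.ge)
    have hfpos : 0 < inertiaDeg' Q Q' :=
      Ideal.inertiaDeg'_pos Q Q'
    exact Nat.mul_pos (Nat.pos_of_ne_zero hene) hfpos
  -- existence of a prime above Q
  obtain ⟨Q'0, hQ'0max, hQ'0c⟩ := my_exists_prime_over (k := ↥M) (F := ↥(M ⊔ T)) hQ
  have hQ'0mem := (my_mem_factors_iff hQ Q'0).mpr ⟨hQ'0max, hQ'0c⟩
  refine ⟨Q'0, ⟨hQ'0max, by rw [halg]; exact hQ'0c⟩, ?_⟩
  rintro y ⟨hymax, hyc⟩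
  rw [halg] at hyc
  have hymem := (my_mem_factors_iff hQ y).mpr ⟨hymax, hyc⟩
  by_contra hne
  have hsub : ({y, Q'0} : Finset (Ideal (𝓞 ↥(M ⊔ T)))) ⊆ (UniqueFactorizationMonoid.factors
      (map (algebraMap (𝓞 ↥M) (𝓞 ↥(M ⊔ T))) Q)).toFinset := by
    intro r hr
    rcases Finset.mem_insert.mp hr with h | h
    · exact h ▸ hymem
    · exact (Finset.mem_singleton.mp h) ▸ hQ'0mem
  have h2 : ∑ r ∈ ({y, Q'0} : Finset (Ideal (𝓞 ↥(M ⊔ T)))),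
      (ramificationIdx' Q r
        * inertiaDeg' Q r)
      ≤ ∑ r ∈ (UniqueFactorizationMonoid.factors
          (map (algebraMap (𝓞 ↥M) (𝓞 ↥(M ⊔ T))) Q)).toFinset,
        (ramificationIdx' Q r
          * inertiaDeg' Q r) :=
    Finset.sum_le_sum_of_subset hsub
  rw [Finset.sum_pair hne] at h2
  have hy_ge := Nat.le_of_dvd (hpos y hymem) (key y hymax hyc)
  have h0_ge := Nat.le_of_dvd (hpos Q'0 hQ'0mem) (key Q'0 hQ'0max hQ'0c)
  dsimp only [IsDedekindDomain.primesOverFinset] at hsum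
  rw [hsum] at h2
  have := h2.trans hLM_le
  omega
end

section
/- Let K be a real number field and F(T) ∈ K[T] a polynomial of degree n > 0. Suppose l₀, …, l_k (with k < n) are positive reals such that the polynomials F(T + l₀), …, F(T + l_k) are linearly independent over ℂ. Then there exists a constant C > 0 such that for every real l > C, the polynomials F(T + l₀), …, F(T + l_k), F(T + l) are linearly independent over ℂ. -/
open Polynomial

lemma taylor_sum_hasse (G : ℂ[X]) (N : ℕ) (hG : G.natDegree ≤ N) (x : ℂ) :
    taylor x G = ∑ m ∈ Finset.range (N+1), x ^ m • hasseDeriv m G := by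
  ext k
  rw [taylor_coeff, finset_sum_coeff]
  rw [eval_eq_sum_range' (lt_of_le_of_lt (natDegree_hasseDeriv_le G k)
    (Nat.lt_succ_of_le (le_trans (Nat.sub_le _ _) hG)))]
  apply Finset.sum_congr rfl
  intro m _
  rw [coeff_smul, hasseDeriv_coeff, hasseDeriv_coeff, smul_eq_mul]
  rw [Nat.add_comm k m, Nat.choose_symm_add]
  ring

lemma li_of_deg (n : ℕ) (v : Fin (n+1) → ℂ[X]) (h0 : ∀ i, v i ≠ 0)
    (hdeg : ∀ i : Fin (n+1), (v i).natDegree = n - (i : ℕ)) :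
    LinearIndependent ℂ v := by
  rw [Fintype.linearIndependent_iff]
  intro c hc
  have key : ∀ m : ℕ, ∀ j : Fin (n+1), (j : ℕ) = m → c j = 0 := by
    intro m
    induction m using Nat.strong_induction_on with
    | _ m IH =>
      intro j hj
      have hcoeff : (∑ i : Fin (n+1), c i • v i).coeff (n - m) = 0 := by rw [hc]; simp
      rw [finset_sum_coeff] at hcoeff
      rw [Finset.sum_eq_single j] at hcoeff
      · rw [coeff_smul] at hcoeff
        have hlead : (v j).coeff (n - m) ≠ 0 := by
          rw [← hj, ← hdeg j, coeff_natDegree]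
          exact leadingCoeff_ne_zero.mpr (h0 j)
        exact (smul_eq_zero.mp hcoeff).resolve_right hlead
      · intro i _ hij
        rw [coeff_smul]
        rcases lt_or_gt_of_ne (fun h : (i : ℕ) = (j : ℕ) => hij (Fin.ext h)) with h | h
        · rw [IH (i : ℕ) (by omega) i rfl, zero_smul]
        · have : (v i).natDegree < n - m := by
            rw [hdeg i]; have := i.isLt; omega
          rw [coeff_eq_zero_of_natDegree_lt this, smul_zero]
      · intro h; exact absurd (Finset.mem_univ j) h
  intro j
  exact key (j : ℕ) j rfl

lemma vand_zero (n : ℕ) (c : Fin (n+1) → ℂ)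
    (h : ∀ m : Fin (n+1), ∑ j : Fin (n+1), c j * (j : ℂ) ^ (m : ℕ) = 0) : c = 0 := by
  set M := Matrix.vandermonde (fun j : Fin (n+1) => (j : ℂ)) with hM
  have hdet : M.det ≠ 0 := by
    rw [hM, Matrix.det_vandermonde_ne_zero_iff]
    intro a b hab
    exact_mod_cast Fin.ext (Nat.cast_injective (R := ℂ) hab)
  have hmul : Matrix.vecMul c M = 0 := by
    funext m
    simpa [Matrix.vecMul, dotProduct, hM, Matrix.vandermonde] using h m
  have h2 := congrArg (fun w => Matrix.vecMul w M⁻¹) hmul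
  simpa [Matrix.vecMul_vecMul, Matrix.mul_nonsing_inv M (isUnit_iff_ne_zero.mpr hdet)] using h2

lemma hasse_li (G : ℂ[X]) (n : ℕ) (hGn : G.natDegree = n) (hG0 : G ≠ 0) :
    LinearIndependent ℂ (fun m : Fin (n+1) => hasseDeriv (m : ℕ) G) := by
  apply li_of_deg
  · intro i hzero
    have hco : (hasseDeriv (i : ℕ) G).coeff (n - (i : ℕ)) = 0 := by rw [hzero]; simp
    rw [hasseDeriv_coeff] at hco
    have hni : n - (i : ℕ) + (i : ℕ) = n := by have := i.isLt; omega
    rw [hni] at hco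
    have h1 : G.coeff n ≠ 0 := by
      rw [← hGn, coeff_natDegree]; exact leadingCoeff_ne_zero.mpr hG0
    have h2 : ((n.choose (i : ℕ) : ℂ)) ≠ 0 := by
      exact_mod_cast (Nat.choose_pos (by have := i.isLt; omega : (i : ℕ) ≤ n)).ne'
    exact (mul_ne_zero h2 h1) hco
  · intro i
    rw [natDegree_hasseDeriv, hGn]

lemma taylor_nodes_li (G : ℂ[X]) (n : ℕ) (hGn : G.natDegree = n) (hG0 : G ≠ 0) :
    LinearIndependent ℂ (fun j : Fin (n+1) => taylor ((j : ℕ) : ℂ) G) := by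
  rw [Fintype.linearIndependent_iff]
  intro c hc
  have expand : ∑ j : Fin (n+1), c j • taylor ((j : ℕ) : ℂ) G
      = ∑ m : Fin (n+1), (∑ j : Fin (n+1), c j * ((j : ℕ) : ℂ) ^ (m : ℕ)) • hasseDeriv (m : ℕ) G := by
    calc ∑ j : Fin (n+1), c j • taylor ((j : ℕ) : ℂ) G
        = ∑ j : Fin (n+1), ∑ m ∈ Finset.range (n+1), (c j * ((j : ℕ) : ℂ) ^ m) • hasseDeriv m G := by
          apply Finset.sum_congr rfl; intro j _
          rw [taylor_sum_hasse G n hGn.le, Finset.smul_sum]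
          simp [smul_smul]
      _ = ∑ m ∈ Finset.range (n+1), ∑ j : Fin (n+1), (c j * ((j : ℕ) : ℂ) ^ m) • hasseDeriv m G :=
          Finset.sum_comm
      _ = ∑ m ∈ Finset.range (n+1), (∑ j : Fin (n+1), c j * ((j : ℕ) : ℂ) ^ m) • hasseDeriv m G := by
          apply Finset.sum_congr rfl; intro m _; rw [Finset.sum_smul]
      _ = ∑ m : Fin (n+1), (∑ j : Fin (n+1), c j * ((j : ℕ) : ℂ) ^ (m : ℕ)) • hasseDeriv (m : ℕ) G := by
          rw [← Fin.sum_univ_eq_sum_range (fun m =>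
            (∑ j : Fin (n+1), c j * ((j : ℕ) : ℂ) ^ m) • hasseDeriv m G) (n+1)]
  rw [expand] at hc
  have hz := Fintype.linearIndependent_iff.mp (hasse_li G n hGn hG0) _ hc
  have h0 := vand_zero n c (fun m => hz m)
  exact fun i => congrFun h0 i

/-- for a real number field `K` and `F ∈ K[T]` of degree `n > 0`, if the
shifted polynomials `F(T + l₀), …, F(T + l_k)` (with `k < n`, `lᵢ > 0`) are linearly
independent over `ℂ`, then there is `C > 0` such that for every real `l > C` the family
`F(T + l₀), …, F(T + l_k), F(T + l)` is still linearly independent over `ℂ`. -/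
theorem stmt10 (K : Subfield ℝ) [NumberField ↥K]
    (F : Polynomial ↥K) (n : ℕ) (hn : F.natDegree = n) (hn0 : 0 < n)
    (k : ℕ) (hk : k < n) (l : Fin (k + 1) → ℝ) (hl : ∀ i, 0 < l i)
    (hind : LinearIndependent ℂ fun i : Fin (k + 1) =>
      (F.map ((algebraMap ℝ ℂ).comp K.subtype)).comp (X + C ((l i : ℂ)))) :
    ∃ C₀ : ℝ, 0 < C₀ ∧ ∀ x : ℝ, C₀ < x →
      LinearIndependent ℂ (Fin.snoc
        (fun i : Fin (k + 1) =>
          (F.map ((algebraMap ℝ ℂ).comp K.subtype)).comp (X + C ((l i : ℂ))))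
        ((F.map ((algebraMap ℝ ℂ).comp K.subtype)).comp (X + C ((x : ℂ))))) := by
  set G : ℂ[X] := F.map ((algebraMap ℝ ℂ).comp K.subtype) with hG
  have hGn : G.natDegree = n := by
    rw [hG, natDegree_map_eq_of_injective (RingHom.injective _), hn]
  have hG0 : G ≠ 0 := by
    intro h
    rw [h, natDegree_zero] at hGn
    omega
  set v : Fin (k + 1) → ℂ[X] := fun i => G.comp (X + C ((l i : ℂ))) with hv
  set W : Submodule ℂ ℂ[X] := Submodule.span ℂ (Set.range v) with hW
  -- find x₀ with taylor x₀ G ∉ W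
  have hx₀ : ∃ x₀ : ℂ, taylor x₀ G ∉ W := by
    by_contra h
    push_neg at h
    haveI : FiniteDimensional ℂ W := FiniteDimensional.span_of_finite ℂ (Set.finite_range v)
    set w : Fin (n + 1) → W := fun j => ⟨taylor ((j : ℕ) : ℂ) G, h _⟩ with hw
    have hwli : LinearIndependent ℂ w := by
      apply LinearIndependent.of_comp W.subtype
      exact taylor_nodes_li G n hGn hG0
    have card := hwli.fintype_card_le_finrank
    have hle : Module.finrank ℂ W ≤ k + 1 := by
      have := finrank_range_le_card (R := ℂ) v
      simpa [Set.finrank] using this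
    simp only [Fintype.card_fin] at card
    omega
  obtain ⟨x₀, hx₀⟩ := hx₀
  obtain ⟨f, hfx, hfW⟩ := Submodule.exists_dual_map_eq_bot_of_notMem hx₀ inferInstance
  have hfW' : ∀ y ∈ W, f y = 0 := by
    intro y hy
    have : f y ∈ W.map f := Submodule.mem_map_of_mem hy
    rwa [hfW, Submodule.mem_bot] at this
  set P : ℂ[X] := ∑ m ∈ Finset.range (n + 1), C (f (hasseDeriv m G)) * X ^ m with hP
  have hPeval : ∀ x : ℂ, P.eval x = f (taylor x G) := by
    intro x
    rw [taylor_sum_hasse G n hGn.le x, map_sum, hP, eval_finset_sum]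
    apply Finset.sum_congr rfl
    intro m _
    rw [eval_mul, eval_C, eval_pow, eval_X, map_smul, smul_eq_mul]
    ring
  have hP0 : P ≠ 0 := by
    intro h
    apply hfx
    rw [← hPeval x₀, h, eval_zero]
  refine ⟨1 + ∑ z ∈ P.roots.toFinset, ‖z‖, by positivity, ?_⟩
  intro x hx
  have hsum : 0 ≤ ∑ z ∈ P.roots.toFinset, ‖z‖ :=
    Finset.sum_nonneg fun z _ => norm_nonneg z
  have hxpos : 0 < x := by linarith
  have hxroot : P.eval ((x : ℂ)) ≠ 0 := by
    intro h
    have hmem : ((x : ℂ)) ∈ P.roots := mem_roots'.mpr ⟨hP0, h⟩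
    have := Finset.single_le_sum (fun z _ => norm_nonneg z)
      (Multiset.mem_toFinset.mpr hmem)
    rw [Complex.norm_real, Real.norm_eq_abs, abs_of_pos hxpos] at this
    linarith
  rw [linearIndependent_fin_snoc]
  refine ⟨hind, ?_⟩
  intro hmem
  apply hxroot
  rw [hPeval, taylor_apply]
  exact hfW' _ hmem
end

section
/- Let q₁, …, q_k be distinct primes and let p be a prime not among them. For each i, let a_i = 1 if q_i is odd and a_i = 2 if q_i = 2, let n_i be the multiplicative order of p modulo q_i^{a_i}, and let r_i = ord_{q_i}(p^{n_i} − 1). Let l₁, …, l_k be nonnegative integers and set m = ∏ q_i^{l_i + r_i}. Then a primitive m-th root of unity has degree n = lcm(n₁q₁^{l₁}, …, n_k q_k^{l_k}) over the finite field 𝔽_p. -/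
lemma keyPrime (q p : ℕ) (hq : q.Prime) (hp : p.Prime) (hpq : p ≠ q)
    (a : ℕ) (ha : a = if q = 2 then 2 else 1)
    (n : ℕ) (hn : n = orderOf ((p : ZMod (q ^ a))))
    (r : ℕ) (hr : r = padicValInt q ((p : ℤ) ^ n - 1))
    (l s : ℕ) :
    (q : ℤ) ^ (l + r) ∣ (p : ℤ) ^ s - 1 ↔ n * q ^ l ∣ s := by
  haveI : Fact q.Prime := ⟨hq⟩
  have ha1 : 1 ≤ a := by rw [ha]; split <;> norm_num
  have hM : 1 < q ^ a := Nat.one_lt_pow (by omega) hq.one_lt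
  haveI : NeZero (q ^ a) := ⟨by omega⟩
  have hcop : Nat.Coprime p (q ^ a) :=
    Nat.Coprime.pow_right _ ((Nat.coprime_primes hp hq).mpr hpq)
  set u : (ZMod (q ^ a))ˣ := ZMod.unitOfCoprime p hcop with hu_def
  have hu : (u : ZMod (q ^ a)) = (p : ZMod (q ^ a)) := ZMod.coe_unitOfCoprime p hcop
  have hn' : n = orderOf u := by rw [hn, ← hu, orderOf_units]
  have npos : 0 < n := by rw [hn']; exact orderOf_pos u
  have horder : ∀ t : ℕ, ((q : ℤ) ^ a ∣ (p : ℤ) ^ t - 1) ↔ n ∣ t := by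
    intro t
    have h1 : ((q : ℤ) ^ a ∣ (p : ℤ) ^ t - 1) ↔
        ((((p : ℤ) ^ t - 1 : ℤ) : ZMod (q ^ a)) = 0) := by
      rw [ZMod.intCast_zmod_eq_zero_iff_dvd]; push_cast; rfl
    rw [h1, hn', orderOf_dvd_iff_pow_eq_one]
    push_cast
    rw [sub_eq_zero]
    constructor
    · intro h; ext; simpa [hu] using h
    · intro h
      have := congrArg (Units.val) h
      simpa [hu] using this
  have hqa_dvd : (q : ℤ) ^ a ∣ (p : ℤ) ^ n - 1 := (horder n).mpr dvd_rfl
  have hpn1 : (p : ℤ) ^ n - 1 ≠ 0 := by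
    have : (1 : ℤ) < (p : ℤ) ^ n := by
      have h2 : (2:ℤ) ≤ (p:ℤ) := by exact_mod_cast hp.two_le
      calc (1:ℤ) < 2 := one_lt_two
        _ ≤ (p:ℤ) := h2
        _ ≤ (p:ℤ) ^ n := le_self_pow₀ (by omega) npos.ne'
    omega
  have hfin : FiniteMultiplicity (q : ℤ) ((p : ℤ) ^ n - 1) :=
    Int.finiteMultiplicity_iff.mpr ⟨by simpa using hq.ne_one, hpn1⟩
  have hrE : emultiplicity (q : ℤ) ((p : ℤ) ^ n - 1) = (r : ℕ∞) := by
    rw [hr, padicValInt.of_ne_one_ne_zero hq.ne_one hpn1,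
      hfin.emultiplicity_eq_multiplicity]
  have hra : a ≤ r := by
    rw [hr]
    rcases (padicValInt_dvd_iff a ((p:ℤ)^n - 1)).mp (by exact_mod_cast hqa_dvd) with h | h
    · exact absurd h hpn1
    · exact h
  have hx : ¬ (q : ℤ) ∣ (p : ℤ) ^ n := by
    intro h
    have := Int.Prime.dvd_pow' hq h
    have hqp : q ∣ p := by exact_mod_cast this
    exact hpq ((Nat.prime_dvd_prime_iff_eq hq hp).mp hqp).symm
  have LTE : ∀ v : ℕ, emultiplicity (q : ℤ) ((p : ℤ) ^ (n * v) - 1)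
      = (r : ℕ∞) + emultiplicity (q : ℤ) (v : ℤ) := by
    intro v
    rw [pow_mul]
    rcases eq_or_ne q 2 with hq2 | hq2
    · have ha2 : a = 2 := by rw [ha, if_pos hq2]
      subst hq2
      have h4 : (4 : ℤ) ∣ (p : ℤ) ^ n - 1 := by
        have h44 : ((2:ℤ))^2 = 4 := by norm_num
        rw [← h44, ← ha2]; exact_mod_cast hqa_dvd
      have h2x : ¬ (2 : ℤ) ∣ (p : ℤ) ^ n := by exact_mod_cast hx
      have h5 := Int.two_pow_sub_pow' (x := (p:ℤ)^n) (y := 1) v (by simpa using h4) h2x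
      have hrE2 : emultiplicity (2:ℤ) ((p:ℤ)^n - 1) = (r:ℕ∞) := by exact_mod_cast hrE
      rw [one_pow] at h5
      push_cast
      rw [h5, hrE2]
    · have hodd : Odd q := hq.odd_of_ne_two hq2
      have hxy : (q : ℤ) ∣ (p : ℤ) ^ n - 1 :=
        dvd_trans (dvd_pow_self _ (by omega)) hqa_dvd
      have h5 := Int.emultiplicity_pow_sub_pow hq hodd (x := (p:ℤ)^n) (y := 1)
        (by simpa using hxy) hx v
      rw [one_pow] at h5
      rw [h5, hrE, Int.natCast_emultiplicity]
  constructor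
  · intro hdvd
    rcases Nat.eq_zero_or_pos s with rfl | hs
    · exact dvd_zero _
    have h1 : (q:ℤ)^a ∣ (p:ℤ)^s - 1 :=
      dvd_trans (pow_dvd_pow _ (show a ≤ l + r by omega)) hdvd
    obtain ⟨v, rfl⟩ := (horder s).mp h1
    have hv : v ≠ 0 := by rintro rfl; simp at hs
    have h2 : ((l + r : ℕ) : ℕ∞) ≤ emultiplicity (q:ℤ) ((p:ℤ)^(n*v) - 1) :=
      pow_dvd_iff_le_emultiplicity.mp hdvd
    rw [LTE v] at h2
    have h3 : (l : ℕ∞) ≤ emultiplicity (q:ℤ) (v:ℤ) := by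
      have h4 : (r : ℕ∞) + (l : ℕ∞) ≤ (r : ℕ∞) + emultiplicity (q:ℤ) (v:ℤ) := by
        calc (r:ℕ∞) + (l:ℕ∞) = ((l + r : ℕ) : ℕ∞) := by push_cast; ring
          _ ≤ _ := h2
      exact (WithTop.add_le_add_iff_left (by simp : (r:ℕ∞) ≠ ⊤)).mp h4
    have h5 : (q:ℤ)^l ∣ (v:ℤ) := pow_dvd_iff_le_emultiplicity.mpr h3
    have h6 : q^l ∣ v := by exact_mod_cast h5
    exact mul_dvd_mul_left n h6
  · rintro ⟨v, rfl⟩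
    rcases eq_or_ne v 0 with rfl | hv
    · simp
    rw [mul_assoc]
    apply pow_dvd_iff_le_emultiplicity.mpr
    rw [LTE (q ^ l * v)]
    have h1 : (l : ℕ∞) ≤ emultiplicity (q:ℤ) ((q ^ l * v : ℕ) : ℤ) := by
      apply pow_dvd_iff_le_emultiplicity.mp
      push_cast
      exact Dvd.intro _ rfl
    calc ((l + r : ℕ) : ℕ∞) = (r : ℕ∞) + (l : ℕ∞) := by push_cast; ring
      _ ≤ (r : ℕ∞) + emultiplicity (q:ℤ) ((q ^ l * v : ℕ) : ℤ) := add_le_add le_rfl h1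


open IntermediateField Polynomial

lemma m_dvd_pow_d (p : ℕ) [hp : Fact p.Prime] (m : ℕ) (hm : 0 < m)
    (μ : AlgebraicClosure (ZMod p)) (hμ : IsPrimitiveRoot μ m) :
    m ∣ p ^ (minpoly (ZMod p) μ).natDegree - 1 := by
  classical
  have hint : IsIntegral (ZMod p) μ := Algebra.IsIntegral.isIntegral μ
  set d := (minpoly (ZMod p) μ).natDegree with hd
  haveI : FiniteDimensional (ZMod p) (ZMod p)⟮μ⟯ := adjoin.finiteDimensional hint
  have hdK : Module.finrank (ZMod p) (ZMod p)⟮μ⟯ = d := adjoin.finrank hint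
  haveI : Finite ((ZMod p)⟮μ⟯) := Module.finite_of_finite (ZMod p)
  haveI : Fintype ((ZMod p)⟮μ⟯) := Fintype.ofFinite _
  have hcard : Fintype.card ((ZMod p)⟮μ⟯) = p ^ d := by
    rw [Module.card_eq_pow_finrank (K := ZMod p), ZMod.card, hdK]
  set μ' : (ZMod p)⟮μ⟯ := ⟨μ, mem_adjoin_simple_self _ μ⟩ with hμ'
  have hordμ : orderOf μ = m := (hμ.eq_orderOf).symm
  have hordμ' : orderOf μ' = m := by
    rw [← hordμ]
    exact (orderOf_injective ((ZMod p)⟮μ⟯.val.toRingHom.toMonoidHom)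
      ((ZMod p)⟮μ⟯.val.toRingHom.injective) μ').symm
  have hne : μ' ≠ 0 := by
    intro h
    have : μ = 0 := congrArg Subtype.val h
    exact hμ.ne_zero hm.ne' this
  set v : ((ZMod p)⟮μ⟯)ˣ := Units.mk0 μ' hne with hv
  have hordv : orderOf v = m := by rw [← hordμ', ← orderOf_units]; rfl
  have h1 : orderOf v ∣ Fintype.card ((ZMod p)⟮μ⟯)ˣ := orderOf_dvd_card
  rwa [hordv, Fintype.card_units, hcard] at h1

lemma d_le (p : ℕ) [hp : Fact p.Prime] (m : ℕ) (hm : 0 < m)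
    (μ : AlgebraicClosure (ZMod p)) (hμ : IsPrimitiveRoot μ m)
    (N : ℕ) (hN : 0 < N) (hdvd : m ∣ p ^ N - 1) :
    (minpoly (ZMod p) μ).natDegree ≤ N := by
  classical
  have hint : IsIntegral (ZMod p) μ := Algebra.IsIntegral.isIntegral μ
  set d := (minpoly (ZMod p) μ).natDegree with hd
  haveI : FiniteDimensional (ZMod p) (ZMod p)⟮μ⟯ := adjoin.finiteDimensional hint
  have hdK : Module.finrank (ZMod p) (ZMod p)⟮μ⟯ = d := adjoin.finrank hint
  haveI : Finite ((ZMod p)⟮μ⟯) := Module.finite_of_finite (ZMod p)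
  haveI : Fintype ((ZMod p)⟮μ⟯) := Fintype.ofFinite _
  have hcard : Fintype.card ((ZMod p)⟮μ⟯) = p ^ d := by
    rw [Module.card_eq_pow_finrank (K := ZMod p), ZMod.card, hdK]
  haveI : CharP (AlgebraicClosure (ZMod p)) p :=
    charP_of_injective_algebraMap (algebraMap (ZMod p) (AlgebraicClosure (ZMod p))).injective p
  haveI : ExpChar (AlgebraicClosure (ZMod p)) p := ExpChar.prime hp.out
  have hpN1 : 1 ≤ p ^ N := Nat.one_le_pow _ _ hp.out.pos
  have hμfix : μ ^ (p ^ N) = μ := by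
    obtain ⟨c, hc⟩ := hdvd
    have h1 : μ ^ (p ^ N - 1) = 1 := by
      rw [hc, pow_mul, hμ.pow_eq_one, one_pow]
    calc μ ^ (p ^ N) = μ ^ (p ^ N - 1) * μ := by
          rw [← pow_succ, Nat.sub_add_cancel hpN1]
      _ = μ := by rw [h1, one_mul]
  -- subalgebra of fixed points of x ↦ x ^ p ^ N
  set S : Subalgebra (ZMod p) (AlgebraicClosure (ZMod p)) :=
    { carrier := {x | x ^ (p ^ N) = x}
      mul_mem' := fun {x y} hx hy => by
        simp only [Set.mem_setOf_eq] at *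
        rw [mul_pow, hx, hy]
      one_mem' := by simp
      add_mem' := fun {x y} hx hy => by
        simp only [Set.mem_setOf_eq] at *
        rw [add_pow_char_pow, hx, hy]
      zero_mem' := by
        simp only [Set.mem_setOf_eq]
        exact zero_pow (by positivity)
      algebraMap_mem' := fun c => by
        simp only [Set.mem_setOf_eq]
        rw [← map_pow]
        congr 1
        rw [ZMod.pow_card_pow] } with hS
  have hinv : ∀ x ∈ S, x⁻¹ ∈ S := by
    intro x hx
    have hx' : x ^ (p ^ N) = x := hx
    show x⁻¹ ^ (p ^ N) = x⁻¹
    rw [inv_pow, hx']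
  set F : IntermediateField (ZMod p) (AlgebraicClosure (ZMod p)) := S.toIntermediateField hinv with hF
  have hKF : (ZMod p)⟮μ⟯ ≤ F := by
    rw [adjoin_le_iff]
    intro x hx
    rw [Set.mem_singleton_iff] at hx
    rw [hx]
    exact hμfix
  have hfix : ∀ x : ((ZMod p)⟮μ⟯), x ^ (p ^ N) = x := by
    intro x
    have hx : (x : AlgebraicClosure (ZMod p)) ^ (p ^ N) = (x : AlgebraicClosure (ZMod p)) := hKF x.2
    ext
    push_cast
    exact hx
  -- count roots of X ^ p ^ N - X in the field (ZMod p)⟮μ⟯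
  set g : Polynomial ((ZMod p)⟮μ⟯) := X ^ (p ^ N) - X with hg
  have hg0 : g ≠ 0 := FiniteField.X_pow_card_sub_X_ne_zero _ (Nat.one_lt_pow hN.ne' hp.out.one_lt)
  have hgdeg : g.natDegree = p ^ N :=
    FiniteField.X_pow_card_sub_X_natDegree_eq _ (Nat.one_lt_pow hN.ne' hp.out.one_lt)
  have hsub : (Finset.univ : Finset ((ZMod p)⟮μ⟯)) ⊆ g.roots.toFinset := by
    intro x _
    rw [Multiset.mem_toFinset, mem_roots hg0]
    simp only [hg, IsRoot, eval_sub, eval_pow, eval_X]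
    rw [hfix x, sub_self]
  have hle : Fintype.card ((ZMod p)⟮μ⟯) ≤ p ^ N := by
    calc Fintype.card ((ZMod p)⟮μ⟯) = (Finset.univ : Finset ((ZMod p)⟮μ⟯)).card := rfl
      _ ≤ g.roots.toFinset.card := Finset.card_le_card hsub
      _ ≤ Multiset.card g.roots := Multiset.toFinset_card_le _
      _ ≤ g.natDegree := g.card_roots'
      _ = p ^ N := hgdeg
  rw [hcard] at hle
  exact (Nat.pow_le_pow_iff_right hp.out.one_lt).mp hle


/-- degree of a primitive `m`-th root of unity over `𝔽_p`, where
`m = ∏ qᵢ^{lᵢ + rᵢ}`, equals `lcmᵢ (nᵢ · qᵢ^{lᵢ})`. -/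
theorem stmt12 (k : ℕ) (q : Fin k → ℕ) (hq : ∀ i, (q i).Prime)
    (hqdist : Function.Injective q)
    (p : ℕ) (hp : Fact p.Prime) (hpq : ∀ i, p ≠ q i)
    (a : Fin k → ℕ) (ha : ∀ i, a i = if q i = 2 then 2 else 1)
    (n : Fin k → ℕ) (hn : ∀ i, n i = orderOf ((p : ZMod (q i ^ a i))))
    (r : Fin k → ℕ) (hr : ∀ i, r i = padicValInt (q i) ((p : ℤ) ^ n i - 1))
    (l : Fin k → ℕ) (m : ℕ) (hm : m = ∏ i, q i ^ (l i + r i))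
    (μ : AlgebraicClosure (ZMod p)) (hμ : IsPrimitiveRoot μ m) :
    (minpoly (ZMod p) μ).natDegree = Finset.univ.lcm (fun i => n i * q i ^ l i) := by
  classical
  set N := Finset.univ.lcm (fun i => n i * q i ^ l i) with hN
  have hmpos : 0 < m := by
    rw [hm]; exact Finset.prod_pos (fun i _ => pow_pos (hq i).pos _)
  have hnpos : ∀ i, 0 < n i := by
    intro i
    have ha1 : 1 ≤ a i := by rw [ha i]; split <;> norm_num
    have hM : 1 < q i ^ a i := Nat.one_lt_pow (by omega) (hq i).one_lt
    haveI : NeZero (q i ^ a i) := ⟨by omega⟩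
    have hcop : Nat.Coprime p (q i ^ a i) :=
      Nat.Coprime.pow_right _ ((Nat.coprime_primes hp.out (hq i)).mpr (hpq i))
    rw [hn i, ← ZMod.coe_unitOfCoprime p hcop, orderOf_units]
    exact orderOf_pos _
  have hNpos : 0 < N := by
    rcases Nat.eq_zero_or_pos N with h0 | h
    · exfalso
      rw [hN, Finset.lcm_eq_zero_iff] at h0
      obtain ⟨i, -, hi⟩ := h0
      have hi' : n i * q i ^ l i = 0 := hi
      have : 0 < n i * q i ^ l i := Nat.mul_pos (hnpos i) (pow_pos (hq i).pos _)
      omega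
    · exact h
  have hkey : ∀ (i : Fin k) (s : ℕ),
      ((q i : ℤ) ^ (l i + r i) ∣ (p : ℤ) ^ s - 1 ↔ n i * q i ^ l i ∣ s) :=
    fun i s => keyPrime (q i) p (hq i) hp.out (hpq i) (a i) (ha i) (n i) (hn i)
      (r i) (hr i) (l i) s
  have hm' : (m : ℤ) = ∏ i, (q i : ℤ) ^ (l i + r i) := by rw [hm]; push_cast; rfl
  have hiff : ∀ s : ℕ, ((m : ℤ) ∣ (p : ℤ) ^ s - 1 ↔ N ∣ s) := by
    intro s
    constructor
    · intro h
      rw [hN, Finset.lcm_dvd_iff]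
      intro i _
      refine (hkey i s).mp (dvd_trans ?_ h)
      rw [hm']
      exact Finset.dvd_prod_of_mem _ (Finset.mem_univ i)
    · intro h
      rw [hm']
      have hall : ∀ i : Fin k, n i * q i ^ l i ∣ s := by
        intro i
        exact dvd_trans (Finset.dvd_lcm (f := fun j => n j * q j ^ l j)
          (Finset.mem_univ i)) h
      refine Finset.prod_dvd_of_coprime ?_ (fun i _ => (hkey i s).mpr (hall i))
      intro i _ j _ hij
      have hc : Nat.Coprime (q i ^ (l i + r i)) (q j ^ (l j + r j)) :=
        Nat.Coprime.pow _ _ ((Nat.coprime_primes (hq i) (hq j)).mpr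
          (fun he => hij (hqdist he)))
      have hc2 : IsCoprime ((q i ^ (l i + r i) : ℕ) : ℤ) ((q j ^ (l j + r j) : ℕ) : ℤ) :=
        Nat.isCoprime_iff_coprime.mpr hc
      push_cast at hc2
      exact hc2
  have hint : IsIntegral (ZMod p) μ := Algebra.IsIntegral.isIntegral μ
  have hdpos : 0 < (minpoly (ZMod p) μ).natDegree := minpoly.natDegree_pos hint
  -- N divides the degree
  have hd1 : m ∣ p ^ (minpoly (ZMod p) μ).natDegree - 1 := m_dvd_pow_d p m hmpos μ hμ
  have hNd : N ∣ (minpoly (ZMod p) μ).natDegree := by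
    apply (hiff _).mp
    have h1 : 1 ≤ p ^ (minpoly (ZMod p) μ).natDegree := Nat.one_le_pow _ _ hp.out.pos
    have h2 : ((m : ℕ) : ℤ) ∣ ((p ^ (minpoly (ZMod p) μ).natDegree - 1 : ℕ) : ℤ) :=
      Int.natCast_dvd_natCast.mpr hd1
    rwa [Nat.cast_sub h1, Nat.cast_pow, Nat.cast_one] at h2
  -- the degree is at most N
  have hmN : (m : ℤ) ∣ (p : ℤ) ^ N - 1 := (hiff N).mpr dvd_rfl
  have hmNnat : m ∣ p ^ N - 1 := by
    have h1 : 1 ≤ p ^ N := Nat.one_le_pow _ _ hp.out.pos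
    have h2 : ((m : ℕ) : ℤ) ∣ ((p ^ N - 1 : ℕ) : ℤ) := by
      rwa [Nat.cast_sub h1, Nat.cast_pow, Nat.cast_one]
    exact_mod_cast h2
  have hdN : (minpoly (ZMod p) μ).natDegree ≤ N := d_le p m hmpos μ hμ N hNpos hmNnat
  exact Nat.le_antisymm hdN (Nat.le_of_dvd hdpos hNd)
end

section
/- Let E/F be an extension of number fields and define A = {x ∈ O_E : N_{E/F}(x) = 1}, the group of integral units of relative norm 1. Then A is a subgroup of the unit group O_E^× and its rank equals rank(O_E^×) − rank(O_F^×). -/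
open NumberField


set_option maxSynthPendingDepth 2 in
lemma aux_rank_units (K : Type*) [Field K] [NumberField K] :
    Module.rank ℤ (Additive (𝓞 K)ˣ) = (Units.rank K : Cardinal) := by
  classical
  let π : Additive (𝓞 K)ˣ →ₗ[ℤ] Additive ((𝓞 K)ˣ ⧸ Units.torsion K) :=
    (MonoidHom.toAdditive (QuotientGroup.mk' (Units.torsion K))).toIntLinearMap
  have hsurj : Function.Surjective π := fun x =>
    ⟨Additive.ofMul (Quotient.out x.toMul), congrArg Additive.ofMul (Quotient.out_eq x.toMul)⟩
  have hker : Module.rank ℤ (LinearMap.ker π) = 0 := by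
    rw [rank_eq_zero_iff]
    rintro ⟨x, hx⟩
    have hx' : x.toMul ∈ Units.torsion K := by
      simp [π, QuotientGroup.eq_one_iff] at hx
      exact hx
    obtain ⟨n, hn, hxn⟩ := isOfFinOrder_iff_pow_eq_one.mp hx'
    refine ⟨(n : ℤ), by exact_mod_cast hn.ne', Subtype.ext ?_⟩
    show (n : ℤ) • x = 0
    rw [natCast_zsmul]
    exact Additive.toMul.injective (by rw [toMul_nsmul, hxn, toMul_zero])
  have := LinearMap.rank_range_add_rank_ker π
  rw [hker, add_zero, LinearMap.range_eq_top.mpr hsurj, rank_top] at this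
  have hfin : Module.Finite ℤ (Additive ((𝓞 K)ˣ ⧸ Units.torsion K)) :=
    Module.Finite.of_surjective π hsurj
  rw [← this, ← Module.finrank_eq_rank, Units.rank_modTorsion]

/-- the set `A = {x ∈ O_E : N_{E/F}(x) = 1}` of integral units of relative
norm 1 is a subgroup of the unit group `O_E^×`, of rank `rank O_E^× − rank O_F^×`. -/
theorem stmt16 (F E : Type*) [Field F] [Field E] [NumberField F] [NumberField E]
    [Algebra F E] :
    ∃ A : Subgroup (𝓞 E)ˣ,
      (∀ u : (𝓞 E)ˣ, u ∈ A ↔ Algebra.norm F ((u : 𝓞 E) : E) = 1) ∧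
      Module.finrank ℤ (Additive ↥A) = Units.rank E - Units.rank F := by
  classical
  let ν : (𝓞 E)ˣ →* (𝓞 F)ˣ := Units.map (RingOfIntegers.norm F)
  refine ⟨ν.ker, fun u => ?_, ?_⟩
  · rw [MonoidHom.mem_ker, Units.ext_iff]
    show ((RingOfIntegers.norm F (u : 𝓞 E) : 𝓞 F)) = 1 ↔ _
    rw [RingOfIntegers.ext_iff, RingOfIntegers.coe_norm]
    norm_cast
  · let f : Additive (𝓞 E)ˣ →ₗ[ℤ] Additive (𝓞 F)ˣ := (MonoidHom.toAdditive ν).toIntLinearMap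
    have e : Additive ↥ν.ker ≃ₗ[ℤ] ↥(LinearMap.ker f) :=
      AddEquiv.toIntLinearEquiv
        { toFun := fun a => ⟨a.toMul.1, a.toMul.2⟩
          invFun := fun a => Additive.ofMul ⟨a.1, a.2⟩
          left_inv := fun _ => rfl
          right_inv := fun _ => rfl
          map_add' := fun _ _ => rfl }
    -- rank of the range of f is rank F
    have hle : Module.rank ℤ (LinearMap.range f) ≤ (Units.rank F : Cardinal) := by
      rw [← aux_rank_units F]
      exact (LinearMap.range f).rank_le
    have hge : (Units.rank F : Cardinal) ≤ Module.rank ℤ (LinearMap.range f) := by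
      set n := Module.finrank F E with hn
      have hnpos : 0 < n := Module.finrank_pos
      let j : (𝓞 F)ˣ →* (𝓞 E)ˣ := Units.map (algebraMap (𝓞 F) (𝓞 E) : 𝓞 F →* 𝓞 E)
      let g : Additive (𝓞 F)ˣ →ₗ[ℤ] Additive (𝓞 F)ˣ :=
        f ∘ₗ (MonoidHom.toAdditive j).toIntLinearMap
      have hg : ∀ u : (𝓞 F)ˣ, g (Additive.ofMul u) = Additive.ofMul (u ^ n) := by
        intro u
        show Additive.ofMul (ν (j u)) = Additive.ofMul (u ^ n)
        congr 1
        ext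
        show ((RingOfIntegers.norm F ((algebraMap (𝓞 F) (𝓞 E)) (u : 𝓞 F)) : 𝓞 F) : F) = _
        rw [RingOfIntegers.norm_algebraMap]
        push_cast
        rfl
      have hkerg : Module.rank ℤ (LinearMap.ker g) = 0 := by
        rw [rank_eq_zero_iff]
        rintro ⟨x, hx⟩
        refine ⟨(n : ℤ), by exact_mod_cast hnpos.ne', Subtype.ext ?_⟩
        show (n : ℤ) • x = 0
        rw [natCast_zsmul]
        refine Additive.toMul.injective ?_
        rw [toMul_nsmul, toMul_zero]
        have : g (Additive.ofMul x.toMul) = 0 := hx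
        rw [hg] at this
        exact Additive.ofMul.injective this
      have := LinearMap.rank_range_add_rank_ker g
      rw [hkerg, add_zero, aux_rank_units F] at this
      rw [← this]
      exact Submodule.rank_mono (LinearMap.range_comp_le_range _ _)
    have hrange : Module.rank ℤ (LinearMap.range f) = (Units.rank F : Cardinal) :=
      le_antisymm hle hge
    have hrn := LinearMap.lift_rank_range_add_rank_ker f
    rw [hrange, aux_rank_units E, ← Module.finrank_eq_rank ℤ (LinearMap.ker f)] at hrn
    simp only [Cardinal.lift_natCast] at hrn
    have : Units.rank F + Module.finrank ℤ (LinearMap.ker f) = Units.rank E := by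
      exact_mod_cast hrn
    rw [LinearEquiv.finrank_eq e]
    omega
end
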